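/- Let X_1, …, X_k be mutually independent random variables on a probability space, each taking values in [0,1] almost surely, and let X = Σ_{i=1}^k X_i. Then E[ min{1, X} ] ≥ 1 − Π_{i=1}^k (1 − E[X_i]). -/

import Mathlib

open MeasureTheory ProbabilityTheory

lemma aux_weierstrass {ι : Type*} (s : Finset ι) (x : ι → ℝ)
    (h0 : ∀ i ∈ s, 0 ≤ x i) (h1 : ∀ i ∈ s, x i ≤ 1) :
    1 - ∑ i ∈ s, x i ≤ ∏ i ∈ s, (1 - x i) := by
  classical
  induction s using Finset.induction_on with
  | empty => simp
  | @insert a s ha ih =>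
    have h0' : ∀ i ∈ s, 0 ≤ x i := fun i hi => h0 i (Finset.mem_insert_of_mem hi)
    have h1' : ∀ i ∈ s, x i ≤ 1 := fun i hi => h1 i (Finset.mem_insert_of_mem hi)
    have hxa0 : 0 ≤ x a := h0 a (Finset.mem_insert_self a s)
    have hxa1 : x a ≤ 1 := h1 a (Finset.mem_insert_self a s)
    have hsum0 : 0 ≤ ∑ i ∈ s, x i := Finset.sum_nonneg h0'
    rw [Finset.prod_insert ha, Finset.sum_insert ha]
    have hstep : (1 - x a) * (1 - ∑ i ∈ s, x i) ≤ (1 - x a) * ∏ i ∈ s, (1 - x i) :=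
      mul_le_mul_of_nonneg_left (ih h0' h1') (by linarith)
    nlinarith

lemma aux_integral_prod {Ω : Type*} [MeasureSpace Ω] [IsProbabilityMeasure (ℙ : Measure Ω)]
    {ι : Type*} (Y : ι → Ω → ℝ) (hm : ∀ i, Measurable (Y i))
    (hindep : iIndepFun Y ℙ) (s : Finset ι) :
    ∫ ω, ∏ i ∈ s, Y i ω = ∏ i ∈ s, ∫ ω, Y i ω := by
  classical
  induction s using Finset.induction_on with
  | empty => simp
  | @insert a s ha ih =>
    have hind : IndepFun (∏ j ∈ s, Y j) (Y a) ℙ :=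
      hindep.indepFun_finsetProd_of_notMem hm ha
    have heq : (∏ j ∈ s, Y j) = fun ω => ∏ j ∈ s, Y j ω :=
      funext fun ω => Finset.prod_apply ω s Y
    have hmp : AEStronglyMeasurable (∏ j ∈ s, Y j) ℙ := by
      rw [heq]; exact (Finset.measurable_prod s (fun i _ => hm i)).aestronglyMeasurable
    have h1 : ∫ ω, (∏ j ∈ s, Y j ω) * Y a ω = (∫ ω, ∏ j ∈ s, Y j ω) * ∫ ω, Y a ω := by
      have h := hind.integral_mul_eq_mul_integral hmp (hm a).aestronglyMeasurable
      rw [heq] at h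
      exact h
    calc ∫ ω, ∏ i ∈ insert a s, Y i ω
        = ∫ ω, (∏ j ∈ s, Y j ω) * Y a ω := by
          congr 1; funext ω; rw [Finset.prod_insert ha]; ring
      _ = (∫ ω, ∏ j ∈ s, Y j ω) * ∫ ω, Y a ω := h1
      _ = (∏ i ∈ s, ∫ ω, Y i ω) * ∫ ω, Y a ω := by rw [ih]
      _ = ∏ i ∈ insert a s, ∫ ω, Y i ω := by rw [Finset.prod_insert ha]; ring

/-- For mutually independent random variables X_1, …, X_k with values in [0,1]
almost surely, E[min{1, Σ_i X_i}] ≥ 1 − Π_i (1 − E[X_i]). -/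
theorem stmt_5 {Ω : Type*} [MeasureSpace Ω] [IsProbabilityMeasure (ℙ : Measure Ω)]
    {k : ℕ} (X : Fin k → Ω → ℝ)
    (hmeas : ∀ i, Measurable (X i))
    (hindep : iIndepFun X ℙ)
    (hmem : ∀ i, ∀ᵐ ω, X i ω ∈ Set.Icc (0:ℝ) 1) :
    ∫ ω, min 1 (∑ i, X i ω) ≥ 1 - ∏ i, (1 - ∫ ω, X i ω) := by
  classical
  set Y : Fin k → Ω → ℝ := fun i ω => 1 - X i ω with hY
  have hYmeas : ∀ i, Measurable (Y i) := fun i => measurable_const.sub (hmeas i)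
  have hYindep : iIndepFun Y ℙ :=
    hindep.comp (fun i => fun x => 1 - x) (fun i => measurable_const.sub measurable_id)
  have hXint : ∀ i, Integrable (X i) ℙ := by
    intro i
    refine ⟨(hmeas i).aestronglyMeasurable, ?_⟩
    apply HasFiniteIntegral.of_bounded (C := 1)
    filter_upwards [hmem i] with ω hω
    rw [Real.norm_eq_abs, abs_le]; exact ⟨by linarith [hω.1], hω.2⟩
  -- pointwise inequality a.e.
  have hae : ∀ᵐ ω, 1 - ∏ i, Y i ω ≤ min 1 (∑ i, X i ω) := by
    filter_upwards [MeasureTheory.ae_all_iff.2 hmem] with ω hω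
    have h1 : 1 - ∑ i, X i ω ≤ ∏ i, Y i ω := by
      simp only [hY]
      exact aux_weierstrass Finset.univ (fun i => X i ω)
        (fun i _ => (hω i).1) (fun i _ => (hω i).2)
    have h2 : (0:ℝ) ≤ ∏ i, Y i ω := by
      refine Finset.prod_nonneg fun i _ => ?_
      show (0:ℝ) ≤ 1 - X i ω
      linarith [(hω i).2]
    rcases le_total 1 (∑ i, X i ω) with h | h
    · rw [min_eq_left h]; linarith
    · rw [min_eq_right h]; linarith
  have hmin_int : Integrable (fun ω => min 1 (∑ i, X i ω)) ℙ := by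
    refine ⟨(measurable_const.min (Finset.measurable_sum _ fun i _ =>
      hmeas i)).aestronglyMeasurable, ?_⟩
    apply HasFiniteIntegral.of_bounded (C := k)
    filter_upwards [MeasureTheory.ae_all_iff.2 hmem] with ω hω
    rw [Real.norm_eq_abs, abs_le]
    have hsum0 : (0:ℝ) ≤ ∑ i, X i ω := Finset.sum_nonneg fun i _ => (hω i).1
    have hsumk : (∑ i, X i ω) ≤ k := by
      calc (∑ i, X i ω) ≤ ∑ _i : Fin k, (1:ℝ) :=
            Finset.sum_le_sum fun i _ => (hω i).2
        _ = k := by simp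
    constructor
    · have : (0:ℝ) ≤ min 1 (∑ i, X i ω) := le_min one_pos.le hsum0
      have hk : (0:ℝ) ≤ (k:ℝ) := Nat.cast_nonneg k
      linarith
    · exact le_trans (min_le_right _ _) hsumk
  have hprod_int : Integrable (fun ω => ∏ i, Y i ω) ℙ := by
    refine ⟨(Finset.measurable_prod _ fun i _ => hYmeas i).aestronglyMeasurable, ?_⟩
    apply HasFiniteIntegral.of_bounded (C := 1)
    filter_upwards [MeasureTheory.ae_all_iff.2 hmem] with ω hω
    rw [Real.norm_eq_abs]
    calc |∏ i, Y i ω| = ∏ i, |Y i ω| := Finset.abs_prod _ _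
      _ ≤ ∏ i, (1:ℝ) := Finset.prod_le_prod (fun i _ => abs_nonneg _)
          (fun i _ => by
            show |1 - X i ω| ≤ 1
            rw [abs_le]; exact ⟨by linarith [(hω i).2], by linarith [(hω i).1]⟩)
      _ = 1 := by simp
  have key : ∫ ω, ∏ i, Y i ω = ∏ i, (1 - ∫ ω, X i ω) := by
    rw [aux_integral_prod Y hYmeas hYindep]
    refine Finset.prod_congr rfl fun i _ => ?_
    simp only [hY]
    rw [integral_sub (integrable_const 1) (hXint i)]
    simp
  calc ∫ ω, min 1 (∑ i, X i ω) ≥ ∫ ω, (1 - ∏ i, Y i ω) :=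
        integral_mono_ae ((integrable_const 1).sub hprod_int) hmin_int hae
    _ = 1 - ∫ ω, ∏ i, Y i ω := by
        rw [integral_sub (integrable_const 1) hprod_int]; simp
    _ = 1 - ∏ i, (1 - ∫ ω, X i ω) := by rw [key]
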